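/- arXiv:1708.05487 — 8 statements merged into one kernel-verified Lean document; each statement's English description precedes it below -/
import Mathlib

section
/- Let A be a real n×d matrix, y ∈ ℝⁿ, and λ > 0. If θ̂ ∈ ℝᵈ is a global minimizer over ℝᵈ of the function F(θ) = (1/(2n))‖y − Aθ‖₂² + λ‖θ‖₁, then (1/n)·⟨Aθ̂, y − Aθ̂⟩ = λ‖θ̂‖₁, where ⟨·,·⟩ is the Euclidean inner product on ℝⁿ. -/
open Finset

theorem stmt_1 (n d : ℕ) (hn : 0 < n) (hd : 0 < d)
    (A : Matrix (Fin n) (Fin d) ℝ) (y : Fin n → ℝ) (lam : ℝ) (hlam : 0 < lam)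
    (θhat : Fin d → ℝ)
    (hmin : ∀ θ : Fin d → ℝ,
      (1 / (2 * (n : ℝ))) * ∑ i, (y i - A.mulVec θhat i) ^ 2 + lam * ∑ j, |θhat j| ≤
      (1 / (2 * (n : ℝ))) * ∑ i, (y i - A.mulVec θ i) ^ 2 + lam * ∑ j, |θ j|) :
    (1 / (n : ℝ)) * ∑ i, A.mulVec θhat i * (y i - A.mulVec θhat i) = lam * ∑ j, |θhat j| := by
  have hn' : (0:ℝ) < n := by exact_mod_cast hn
  set v : Fin n → ℝ := A.mulVec θhat with hv
  set S0 : ℝ := ∑ i, (y i - v i)^2 with hS0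
  set P : ℝ := ∑ i, v i * (y i - v i) with hP
  set Q : ℝ := ∑ i, (v i)^2 with hQ
  set L : ℝ := ∑ j, |θhat j| with hL
  set c : ℝ := lam * L - P / n with hc
  set B : ℝ := Q / (2*n) with hBdef
  have hQ0 : 0 ≤ Q := Finset.sum_nonneg fun i _ => sq_nonneg _
  have hB : 0 ≤ B := by positivity
  have key : ∀ t : ℝ, -1 < t → 0 ≤ t * c + t^2 * B := by
    intro t ht
    have h := hmin ((1+t) • θhat)
    have hmv : A.mulVec ((1+t) • θhat) = (1+t) • v := by
      rw [hv, Matrix.mulVec_smul]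
    rw [hmv] at h
    have hL' : ∑ j, |((1+t) • θhat) j| = (1+t) * L := by
      rw [hL, Finset.mul_sum]
      refine Finset.sum_congr rfl fun j _ => ?_
      have h1t : (0:ℝ) ≤ 1 + t := by linarith
      simp [Pi.smul_apply, abs_mul, abs_of_nonneg h1t]
    rw [hL'] at h
    have hexp : ∑ i, (y i - ((1+t) • v) i)^2 = S0 - 2*t*P + t^2*Q := by
      have heq : ∀ i ∈ Finset.univ, (y i - ((1+t) • v) i)^2 =
          (y i - v i)^2 - 2*t*(v i * (y i - v i)) + t^2*(v i)^2 := by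
        intro i _
        simp only [Pi.smul_apply, smul_eq_mul]
        ring
      rw [Finset.sum_congr rfl heq]
      simp [Finset.sum_add_distrib, Finset.sum_sub_distrib, ← Finset.mul_sum,
        hS0, hP, hQ]
    rw [hexp] at h
    have hne : (n:ℝ) ≠ 0 := ne_of_gt hn'
    have hrw : (1 / (2 * (n:ℝ))) * (S0 - 2*t*P + t^2*Q) + lam * ((1+t) * L)
        - ((1 / (2 * (n:ℝ))) * S0 + lam * L)
        = t * c + t^2 * B := by
      rw [hc, hBdef]
      field_simp
      ring
    rw [← hrw]
    linarith
  -- conclude c = 0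
  have habs : ∀ ε : ℝ, 0 < ε → ε < 1 → |c| ≤ ε * B := by
    intro ε h1 h2
    have k1 := key ε (by linarith)
    have k2 := key (-ε) (by linarith)
    rw [abs_le]
    constructor <;> nlinarith
  have hc0 : |c| = 0 := by
    rcases eq_or_lt_of_le hB with hB0 | hBpos
    · have h := habs (1/2) (by norm_num) (by norm_num)
      rw [← hB0] at h
      have := abs_nonneg c
      linarith
    · by_contra h
      have hcpos : 0 < |c| := lt_of_le_of_ne (abs_nonneg c) (Ne.symm h)
      set ε := min (1/2) (|c|/(2*B)) with hε
      have hε1 : 0 < ε := lt_min (by norm_num) (by positivity)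
      have hε2 : ε < 1 := lt_of_le_of_lt (min_le_left _ _) (by norm_num)
      have h1 := habs ε hε1 hε2
      have h2 : ε ≤ |c|/(2*B) := min_le_right _ _
      have h3 : ε * B ≤ (|c|/(2*B)) * B := by nlinarith
      have h4 : (|c|/(2*B)) * B = |c|/2 := by field_simp
      linarith
  have hc' : c = 0 := abs_eq_zero.mp hc0
  have : P / n = (1/(n:ℝ)) * P := by ring
  rw [hc] at hc'
  linarith
end

section
/- In the nodewise regression setup, for every j ∈ {1,…,p} one has τ̂_j² = (1/n)·⟨X̃_j − X̃_{-j}θ̂_j, X̃_j⟩, i.e. the penalized residual quantity (1/n)‖X̃_j − X̃_{-j}θ̂_j‖₂² + λ⁽ʲ⁾‖θ̂_j‖₁ equals the normalized inner product of the residual X̃_j − X̃_{-j}θ̂_j with the column X̃_j. -/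
open Finset

/-- Auxiliary: if a quadratic `ε ↦ c*ε + D*ε²` with `D ≥ 0` is nonnegative for all
`ε` with `|ε| < 1`, then `c = 0`. -/
lemma quad_aux (c D : ℝ) (hD : 0 ≤ D)
    (H : ∀ ε : ℝ, |ε| < 1 → 0 ≤ c * ε + D * ε ^ 2) : c = 0 := by
  by_contra hc
  have hcabs : 0 < |c| := abs_pos.mpr hc
  have hD1 : (0:ℝ) < 2 * (D + 1) := by linarith
  set δ : ℝ := min (1/2) (|c| / (2 * (D + 1))) with hδdef
  have hδpos : 0 < δ := lt_min (by norm_num) (div_pos hcabs hD1)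
  have hδlt : δ < 1 := lt_of_le_of_lt (min_le_left _ _) (by norm_num)
  have h1 : 0 ≤ c * δ + D * δ ^ 2 := H δ (by rw [abs_of_pos hδpos]; exact hδlt)
  have h2 : 0 ≤ c * (-δ) + D * (-δ) ^ 2 := H (-δ) (by rw [abs_neg, abs_of_pos hδpos]; exact hδlt)
  have habs : |c| * δ ≤ D * δ ^ 2 := by
    rcases abs_cases c with ⟨h, _⟩ | ⟨h, _⟩
    · rw [h]; nlinarith
    · rw [h]; nlinarith
  have hcle : |c| ≤ D * δ := by
    have := (mul_le_mul_iff_of_pos_right hδpos).mp (by nlinarith : |c| * δ ≤ (D * δ) * δ)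
    exact this
  have hδle : δ * (2 * (D + 1)) ≤ |c| := by
    have : δ ≤ |c| / (2 * (D + 1)) := min_le_right _ _
    rwa [le_div_iff₀ hD1] at this
  nlinarith

theorem stmt_2 (n p : ℕ) (hn : 0 < n) (hp : 2 ≤ p)
    (X : Matrix (Fin n) (Fin p) ℝ) (lam : Fin p → ℝ) (hlam : ∀ j, 0 < lam j)
    (θhat : ∀ j : Fin p, {k : Fin p // k ≠ j} → ℝ)
    (hmin : ∀ j : Fin p, ∀ θ : {k : Fin p // k ≠ j} → ℝ,
      (1 / (2 * (n : ℝ))) * ∑ i, (X i j - ∑ k, X i k.1 * θhat j k) ^ 2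
          + lam j * ∑ k, |θhat j k| ≤
      (1 / (2 * (n : ℝ))) * ∑ i, (X i j - ∑ k, X i k.1 * θ k) ^ 2
          + lam j * ∑ k, |θ k|) :
    ∀ j : Fin p,
      (1 / (n : ℝ)) * ∑ i, (X i j - ∑ k, X i k.1 * θhat j k) ^ 2
          + lam j * ∑ k, |θhat j k| =
      (1 / (n : ℝ)) * ∑ i, (X i j - ∑ k, X i k.1 * θhat j k) * X i j := by
  intro j
  have hn' : (0:ℝ) < n := by exact_mod_cast hn
  set u : Fin n → ℝ := fun i => ∑ k, X i k.1 * θhat j k with hu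
  set r : Fin n → ℝ := fun i => X i j - u i with hr
  set S : ℝ := ∑ k, |θhat j k| with hS
  set R : ℝ := ∑ i, r i * u i with hR
  set U : ℝ := ∑ i, (u i) ^ 2 with hU
  have hUnn : 0 ≤ U := Finset.sum_nonneg fun i _ => sq_nonneg _
  have hSnn : 0 ≤ S := Finset.sum_nonneg fun k _ => abs_nonneg _
  -- key inequality from optimality, for scaled vectors t • θhat
  have key : ∀ t : ℝ, 0 < t →
      0 ≤ ((1-t) * (R - n * lam j * S) + (1-t)^2 * (U / 2)) := by
    intro t ht
    have h := hmin j (fun k => t * θhat j k)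
    have expand : ∑ i, (X i j - ∑ k, X i k.1 * (t * θhat j k)) ^ 2
        = ∑ i, (r i) ^ 2 + (2 * (1-t) * R + (1-t)^2 * U) := by
      have e1 : ∀ i, X i j - ∑ k, X i k.1 * (t * θhat j k) = r i + (1-t) * u i := by
        intro i
        have : ∑ k : {k : Fin p // k ≠ j}, X i k.1 * (t * θhat j k)
            = t * ∑ k : {k : Fin p // k ≠ j}, X i k.1 * θhat j k := by
          rw [Finset.mul_sum]; exact Finset.sum_congr rfl fun k _ => by ring
        rw [this, hr, hu]; ring
      simp_rw [e1]
      have e2 : ∀ i : Fin n, (r i + (1-t) * u i) ^ 2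
          = (r i)^2 + (2 * (1-t)) * (r i * u i) + (1-t)^2 * (u i)^2 := fun i => by ring
      simp_rw [e2]
      rw [Finset.sum_add_distrib, Finset.sum_add_distrib, ← Finset.mul_sum, ← Finset.mul_sum,
        ← hR, ← hU]
      ring
    have habs : ∑ k : {k : Fin p // k ≠ j}, |t * θhat j k| = t * S := by
      simp_rw [abs_mul, abs_of_pos ht]
      rw [← Finset.mul_sum, hS]
    rw [expand, habs, mul_add, ← hS] at h
    have h4 : 0 ≤ (1/(2*(n:ℝ))) * (2 * (1-t) * R + (1-t)^2 * U) + lam j * (t-1) * S := by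
      nlinarith
    have heq : (1-t) * (R - n * lam j * S) + (1-t)^2 * (U / 2)
        = (n:ℝ) * ((1/(2*(n:ℝ))) * (2 * (1-t) * R + (1-t)^2 * U) + lam j * (t-1) * S) := by
      field_simp
      ring
    rw [heq]
    exact mul_nonneg hn'.le h4
  -- apply the quadratic lemma with ε = 1 - t
  have hc : R - n * lam j * S = 0 := by
    apply quad_aux _ (U/2) (by linarith)
    intro ε hε
    have h1 : 0 < 1 - ε := by
      rcases abs_lt.mp hε with ⟨_, h⟩; linarith
    have := key (1 - ε) h1
    have hε' : 1 - (1 - ε) = ε := by ring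
    rw [hε'] at this
    calc (0:ℝ) ≤ ε * (R - n * lam j * S) + ε^2 * (U/2) := this
      _ = (R - n * lam j * S) * ε + U/2 * ε^2 := by ring
  have hRval : R = n * lam j * S := by linarith
  -- final computation
  have hrhs : ∑ i, (X i j - ∑ k, X i k.1 * θhat j k) * X i j
      = ∑ i, (r i)^2 + R := by
    have : ∀ i : Fin n, (X i j - ∑ k, X i k.1 * θhat j k) * X i j
        = (r i)^2 + r i * u i := by
      intro i
      have : X i j = r i + u i := by rw [hr]; ring
      rw [hr, hu]
      simp only [← hu]
      ring
    simp_rw [this]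
    rw [Finset.sum_add_distrib, ← hR]
  rw [hrhs, hRval]
  have hsq : ∑ i, (X i j - ∑ k, X i k.1 * θhat j k) ^ 2 = ∑ i, (r i) ^ 2 := rfl
  rw [hsq]
  have hnne : (n:ℝ) ≠ 0 := ne_of_gt hn'
  field_simp
end

section
/- In the nodewise regression setup with all τ̂_j² > 0, for every j ∈ {1,…,p} the j-th entry of the row vector Θ̂_{j·}Σ̃ equals 1; equivalently, (1/n)·Θ̂_{j·}X̃ᵀX̃_j = 1, where Θ̂_{j·} denotes the j-th row of Θ̂ and X̃_j the j-th column of X̃. -/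
open Finset

lemma quad_aux_s3 (a c : ℝ) (ha : 0 ≤ a)
    (h : ∀ t : ℝ, 0 ≤ t → 0 ≤ a * (t ^ 2 - 1) + c * (t - 1)) :
    2 * a + c = 0 := by
  set d : ℝ := 2 * a + c with hd
  set M : ℝ := 2 * a + 2 * |d| + 1 with hM
  have habs : 0 ≤ |d| := abs_nonneg d
  have hMpos : 0 < M := by rw [hM]; linarith
  have hdM : d / M ≤ 1 := by
    rw [div_le_one hMpos]
    have := le_abs_self d
    rw [hM]; linarith
  have ht : 0 ≤ 1 - d / M := by linarith
  have h1 := h (1 - d / M) ht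
  have e : a * ((1 - d / M) ^ 2 - 1) + c * ((1 - d / M) - 1)
      = -(d ^ 2 * (M - a)) / M ^ 2 := by
    have hM0 : M ≠ 0 := ne_of_gt hMpos
    rw [hd]
    field_simp
    ring
  rw [e] at h1
  have hM2 : 0 < M ^ 2 := by positivity
  have h2 : d ^ 2 * (M - a) ≤ 0 := by
    by_contra hcon
    push_neg at hcon
    have : -(d ^ 2 * (M - a)) / M ^ 2 < 0 := div_neg_of_neg_of_pos (by linarith) hM2
    linarith
  have hMa : 0 < M - a := by rw [hM]; linarith
  have hd2 : d ^ 2 ≤ 0 := nonpos_of_mul_nonpos_right (by linarith [mul_comm (d^2) (M-a)]) hMa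
  have hd0 : d ^ 2 = 0 := le_antisymm hd2 (sq_nonneg d)
  have : d = 0 := by
    have := pow_eq_zero_iff (n := 2) (by norm_num) |>.mp hd0
    exact this
  linarith

theorem stmt_3 (n p : ℕ) (hn : 0 < n) (hp : 2 ≤ p)
    (X : Matrix (Fin n) (Fin p) ℝ) (lam : Fin p → ℝ) (hlam : ∀ j, 0 < lam j)
    (θhat : ∀ j : Fin p, {k : Fin p // k ≠ j} → ℝ)
    (hmin : ∀ j : Fin p, ∀ θ : {k : Fin p // k ≠ j} → ℝ,
      (1 / (2 * (n : ℝ))) * ∑ i, (X i j - ∑ k, X i k.1 * θhat j k) ^ 2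
          + lam j * ∑ k, |θhat j k| ≤
      (1 / (2 * (n : ℝ))) * ∑ i, (X i j - ∑ k, X i k.1 * θ k) ^ 2
          + lam j * ∑ k, |θ k|)
    (tau2 : Fin p → ℝ)
    (htau : ∀ j, tau2 j =
      (1 / (n : ℝ)) * ∑ i, (X i j - ∑ k, X i k.1 * θhat j k) ^ 2
          + lam j * ∑ k, |θhat j k|)
    (htaupos : ∀ j, 0 < tau2 j)
    (Theta : Matrix (Fin p) (Fin p) ℝ)
    (hTheta : ∀ j k, Theta j k =
      (if h : k = j then (1 : ℝ) else -(θhat j ⟨k, h⟩)) / tau2 j)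
    (Sigma : Matrix (Fin p) (Fin p) ℝ)
    (hSigma : ∀ k l, Sigma k l = (1 / (n : ℝ)) * ∑ i, X i k * X i l) :
    ∀ j : Fin p, ∑ k, Theta j k * Sigma k j = 1 := by
  intro j
  have hn' : (0 : ℝ) < n := by exact_mod_cast hn
  have hn0 : (n : ℝ) ≠ 0 := ne_of_gt hn'
  set A : ℝ := ∑ i, (X i j) ^ 2 with hA
  set B : ℝ := ∑ i, X i j * ∑ k : {k : Fin p // k ≠ j}, X i k.1 * θhat j k with hB
  set Q : ℝ := ∑ i, (∑ k : {k : Fin p // k ≠ j}, X i k.1 * θhat j k) ^ 2 with hQ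
  set S : ℝ := ∑ k : {k : Fin p // k ≠ j}, |θhat j k| with hS
  have hQ0 : 0 ≤ Q := Finset.sum_nonneg fun i _ => sq_nonneg _
  -- expansion of the quadratic
  have hexp : ∀ s : ℝ,
      ∑ i, (X i j - s * ∑ k : {k : Fin p // k ≠ j}, X i k.1 * θhat j k) ^ 2
        = A - 2 * s * B + s ^ 2 * Q := by
    intro s
    rw [hA, hB, hQ, Finset.mul_sum, Finset.mul_sum, ← Finset.sum_sub_distrib,
      ← Finset.sum_add_distrib]
    exact Finset.sum_congr rfl fun i _ => by ring
  have hbase : ∑ i, (X i j - ∑ k : {k : Fin p // k ≠ j}, X i k.1 * θhat j k) ^ 2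
      = A - 2 * B + Q := by
    have := hexp 1
    simpa using this
  -- the key identity B = Q + n * lam j * S
  have hF : ∀ t : ℝ, 0 ≤ t →
      0 ≤ (Q / (2 * n)) * (t ^ 2 - 1) + (lam j * S - B / n) * (t - 1) := by
    intro t ht
    have h := hmin j (fun k => t * θhat j k)
    have hsum : ∀ i : Fin n,
        (∑ k : {k : Fin p // k ≠ j}, X i k.1 * (t * θhat j k))
          = t * ∑ k : {k : Fin p // k ≠ j}, X i k.1 * θhat j k := by
      intro i
      rw [Finset.mul_sum]
      exact Finset.sum_congr rfl fun k _ => by ring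
    have habs : (∑ k : {k : Fin p // k ≠ j}, |t * θhat j k|) = t * S := by
      rw [hS, Finset.mul_sum]
      exact Finset.sum_congr rfl fun k _ => by rw [abs_mul, abs_of_nonneg ht]
    simp only [hsum, habs, hbase, hexp t] at h
    have h2 : (1 / (2 * (n:ℝ))) * (A - 2 * B + Q) + lam j * S ≤
        (1 / (2 * (n:ℝ))) * (A - 2 * t * B + t ^ 2 * Q) + lam j * (t * S) := h
    have e1 : (Q / (2 * n)) * (t ^ 2 - 1) + (lam j * S - B / n) * (t - 1)
        = ((1 / (2 * (n:ℝ))) * (A - 2 * t * B + t ^ 2 * Q) + lam j * (t * S))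
          - ((1 / (2 * (n:ℝ))) * (A - 2 * B + Q) + lam j * S) := by
      field_simp
      ring
    rw [e1]
    linarith
  have hkey : 2 * (Q / (2 * n)) + (lam j * S - B / n) = 0 :=
    quad_aux_s3 _ _ (by positivity) hF
  have hBkey : B = Q + n * (lam j * S) := by
    field_simp at hkey
    have h' : (2 * (n:ℝ)) * (Q + n * (lam j * S) - B) = 0 := by linear_combination (2 * (n:ℝ)) * hkey
    have h2 : Q + (n:ℝ) * (lam j * S) - B = 0 :=
      (mul_eq_zero.mp h').resolve_left (by positivity)
    linarith
  -- tau2 j in terms of A B Q S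
  have htauj : tau2 j = (1 / (n : ℝ)) * (A - 2 * B + Q) + lam j * S := by
    rw [htau j, hbase]
  have htpos := htaupos j
  have ht0 : tau2 j ≠ 0 := ne_of_gt htpos
  -- compute the sum
  have split : ∀ f : Fin p → ℝ,
      ∑ k, f k = f j + ∑ k : {k : Fin p // k ≠ j}, f k.1 := by
    intro f
    rw [← Finset.add_sum_erase _ f (Finset.mem_univ j)]
    congr 1
    exact Finset.sum_subtype _ (fun x => by simp [Finset.mem_erase]) f
  rw [split (fun k => Theta j k * Sigma k j)]
  have hdiag : Theta j j * Sigma j j = (1 / tau2 j) * ((1 / (n:ℝ)) * A) := by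
    have h1 : ∑ i, X i j * X i j = A := by
      rw [hA]; exact Finset.sum_congr rfl fun i _ => (pow_two (X i j)).symm
    rw [hTheta, hSigma, dif_pos rfl, h1]
  have hoff : (∑ k : {k : Fin p // k ≠ j}, Theta j k.1 * Sigma k.1 j)
      = -(1 / tau2 j) * ((1 / (n:ℝ)) * B) := by
    have : ∀ k : {k : Fin p // k ≠ j},
        Theta j k.1 * Sigma k.1 j
          = -(1 / tau2 j) * ((1 / (n:ℝ)) * (θhat j k * ∑ i, X i k.1 * X i j)) := by
      intro k
      rw [hTheta, hSigma, dif_neg k.2]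
      ring
    rw [Finset.sum_congr rfl fun k _ => this k]
    rw [← Finset.mul_sum, ← Finset.mul_sum]
    congr 2
    have hswap : (∑ k : {k : Fin p // k ≠ j}, θhat j k * ∑ i, X i k.1 * X i j)
        = ∑ i, X i j * ∑ k : {k : Fin p // k ≠ j}, X i k.1 * θhat j k := by
      simp only [Finset.mul_sum]
      rw [Finset.sum_comm]
      exact Finset.sum_congr rfl fun i _ => Finset.sum_congr rfl fun k _ => by ring
    exact hswap.trans hB.symm
  rw [hdiag, hoff]
  have : (1 / tau2 j) * ((1 / (n:ℝ)) * A) + -(1 / tau2 j) * ((1 / (n:ℝ)) * B)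
      = (A - B) / (n * tau2 j) := by
    field_simp
    ring
  rw [this]
  have hfin : A - B = n * tau2 j := by
    rw [htauj]
    field_simp
    linarith [hBkey]
  rw [hfin]
  field_simp
end

section
/- In the nodewise regression setup with all τ̂_j² > 0, the approximate-inverse error satisfies max_{j∈[p]} ‖Θ̂_{j·}Σ̃ − e_jᵀ‖_∞ ≤ max_{j∈[p]} (λ⁽ʲ⁾ / τ̂_j²), where Θ̂_{j·} is the j-th row of Θ̂, e_j is the j-th standard basis vector of ℝᵖ, and ‖·‖_∞ is the maximum absolute value of the coordinates of a vector in ℝᵖ. -/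
open Finset

lemma lim_aux {a b c : ℝ} (hc : 0 ≤ c)
    (h : ∀ t : ℝ, 0 < t → t < 1 → a ≤ b + t * c) : a ≤ b := by
  refine le_of_forall_pos_le_add fun ε hε => ?_
  set t := min (ε / (c + 1)) (1 / 2) with ht
  have ht0 : 0 < t := lt_min (by positivity) one_half_pos
  have ht1 : t < 1 := lt_of_le_of_lt (min_le_right _ _) (by norm_num)
  have h2 : t * c ≤ ε := by
    calc t * c ≤ (ε / (c + 1)) * c :=
          mul_le_mul_of_nonneg_right (min_le_left _ _) hc
    _ ≤ ε := by
        rw [div_mul_eq_mul_div, div_le_iff₀ (by linarith)]; nlinarith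
  linarith [h t ht0 ht1]

lemma sq_expand (n : ℕ) (r v : Fin n → ℝ) (t : ℝ) :
    ∑ i, (r i - t * v i) ^ 2
      = ∑ i, r i ^ 2 - 2 * t * ∑ i, r i * v i + t ^ 2 * ∑ i, v i ^ 2 := by
  rw [Finset.mul_sum, Finset.mul_sum, ← Finset.sum_sub_distrib, ← Finset.sum_add_distrib]
  exact Finset.sum_congr rfl fun i _ => by ring

theorem stmt_4 (n p : ℕ) (hn : 0 < n) (hp : 2 ≤ p)
    (X : Matrix (Fin n) (Fin p) ℝ) (lam : Fin p → ℝ) (hlam : ∀ j, 0 < lam j)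
    (θhat : ∀ j : Fin p, {k : Fin p // k ≠ j} → ℝ)
    (hmin : ∀ j : Fin p, ∀ θ : {k : Fin p // k ≠ j} → ℝ,
      (1 / (2 * (n : ℝ))) * ∑ i, (X i j - ∑ k, X i k.1 * θhat j k) ^ 2
          + lam j * ∑ k, |θhat j k| ≤
      (1 / (2 * (n : ℝ))) * ∑ i, (X i j - ∑ k, X i k.1 * θ k) ^ 2
          + lam j * ∑ k, |θ k|)
    (tau2 : Fin p → ℝ)
    (htau : ∀ j, tau2 j =
      (1 / (n : ℝ)) * ∑ i, (X i j - ∑ k, X i k.1 * θhat j k) ^ 2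
          + lam j * ∑ k, |θhat j k|)
    (htaupos : ∀ j, 0 < tau2 j)
    (Theta : Matrix (Fin p) (Fin p) ℝ)
    (hTheta : ∀ j k, Theta j k =
      (if h : k = j then (1 : ℝ) else -(θhat j ⟨k, h⟩)) / tau2 j)
    (Sigma : Matrix (Fin p) (Fin p) ℝ)
    (hSigma : ∀ k l, Sigma k l = (1 / (n : ℝ)) * ∑ i, X i k * X i l) :
    ∀ j k : Fin p,
      |∑ l, Theta j l * Sigma l k - (if k = j then (1 : ℝ) else 0)| ≤
        Finset.univ.sup' (Finset.univ_nonempty_iff.mpr ⟨⟨0, by omega⟩⟩)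
          (fun j' => lam j' / tau2 j') := by
  intro j k
  have hnpos : (0 : ℝ) < n := by exact_mod_cast hn
  set r : Fin n → ℝ := fun i => X i j - ∑ k', X i k'.1 * θhat j k' with hr
  -- residual identity: ∑_l c_l X i l = r i
  have hresid : ∀ i, ∑ l, (if h : l = j then (1 : ℝ) else -(θhat j ⟨l, h⟩)) * X i l = r i := by
    intro i
    rw [← Finset.add_sum_erase _ _ (Finset.mem_univ j)]
    rw [dif_pos rfl, one_mul]
    have hsub : ∑ l ∈ Finset.univ.erase j,
        (if h : l = j then (1 : ℝ) else -(θhat j ⟨l, h⟩)) * X i l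
        = ∑ k' : {k : Fin p // k ≠ j},
            (if h : k'.1 = j then (1 : ℝ) else -(θhat j ⟨k'.1, h⟩)) * X i k'.1 := by
      apply Finset.sum_subtype
      intro x; simp
    rw [hsub]
    have hterm : ∀ k' : {k : Fin p // k ≠ j},
        (if h : k'.1 = j then (1 : ℝ) else -(θhat j ⟨k'.1, h⟩)) * X i k'.1
        = -(X i k'.1 * θhat j k') := by
      intro k'; rw [dif_neg k'.2]; ring
    rw [Finset.sum_congr rfl fun k' _ => hterm k', Finset.sum_neg_distrib]
    simp only [hr]
    ring
  -- general perturbation inequality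
  have hkey : ∀ θ : {k : Fin p // k ≠ j} → ℝ,
      (1 / (2 * (n : ℝ))) * ∑ i, r i ^ 2 + lam j * ∑ k', |θhat j k'| ≤
      (1 / (2 * (n : ℝ))) * ∑ i, (X i j - ∑ k', X i k'.1 * θ k') ^ 2
          + lam j * ∑ k', |θ k'| := hmin j
  -- off-diagonal KKT: |∑ i, r i * X i k0| ≤ n * lam j
  have hKKT : ∀ k0 : Fin p, k0 ≠ j → |∑ i, r i * X i k0| ≤ (n : ℝ) * lam j := by
    intro k0 hk0
    set A := ∑ i, r i * X i k0 with hA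
    set B := ∑ i, (X i k0) ^ 2 with hB
    have hBnn : 0 ≤ B := Finset.sum_nonneg fun i _ => sq_nonneg _
    have hineq : ∀ t : ℝ, t * A ≤ t ^ 2 / 2 * B + (n : ℝ) * lam j * |t| := by
      intro t
      have hexp : ∀ i, X i j - ∑ k', X i k'.1 *
          (θhat j k' + if k' = ⟨k0, hk0⟩ then t else 0) = r i - t * X i k0 := by
        intro i
        have hs : ∑ k', X i k'.1 * (θhat j k' + if k' = ⟨k0, hk0⟩ then t else 0)
            = (∑ k', X i k'.1 * θhat j k') + t * X i k0 := by
          simp only [mul_add, mul_ite, mul_zero]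
          rw [Finset.sum_add_distrib]
          simp [mul_comm]
        rw [hs]; simp only [hr]; ring
      have h1 := hkey (fun k' => θhat j k' + if k' = ⟨k0, hk0⟩ then t else 0)
      have hsum : ∑ i, (X i j - ∑ k', X i k'.1 *
            (θhat j k' + if k' = ⟨k0, hk0⟩ then t else 0)) ^ 2
          = ∑ i, (r i - t * X i k0) ^ 2 :=
        Finset.sum_congr rfl fun i _ => by rw [hexp i]
      rw [hsum, sq_expand n r (fun i => X i k0) t] at h1
      have h2 : ∑ k', |θhat j k' + if k' = ⟨k0, hk0⟩ then t else 0|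
          ≤ ∑ k', |θhat j k'| + |t| := by
        have hb : ∀ k' : {k : Fin p // k ≠ j},
            |θhat j k' + if k' = ⟨k0, hk0⟩ then t else 0|
            ≤ |θhat j k'| + (if k' = ⟨k0, hk0⟩ then |t| else 0) := by
          intro k'
          by_cases h : k' = ⟨k0, hk0⟩ <;> simp [h, abs_add_le]
        calc ∑ k', |θhat j k' + if k' = ⟨k0, hk0⟩ then t else 0|
            ≤ ∑ k', (|θhat j k'| + (if k' = ⟨k0, hk0⟩ then |t| else 0)) :=
              Finset.sum_le_sum fun k' _ => hb k'
          _ = ∑ k', |θhat j k'| + |t| := by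
              rw [Finset.sum_add_distrib]; simp
      have h3 : lam j * ∑ k', |θhat j k' + if k' = ⟨k0, hk0⟩ then t else 0|
          ≤ lam j * ∑ k', |θhat j k'| + lam j * |t| := by
        have := mul_le_mul_of_nonneg_left h2 (le_of_lt (hlam j))
        linarith [mul_add (lam j) (∑ k', |θhat j k'|) |t|, this]
      have e1 : (1 / (2 * (n : ℝ))) * (∑ i, r i ^ 2 - 2 * t * A + t ^ 2 * B)
          = (1 / (2 * (n : ℝ))) * (∑ i, r i ^ 2)
            + (1 / (2 * (n : ℝ))) * (-(2 * t * A) + t ^ 2 * B) := by ring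
      rw [e1] at h1
      have h0 : 0 ≤ (1 / (2 * (n : ℝ))) * (-(2 * t * A) + t ^ 2 * B) + lam j * |t| := by
        linarith
      have h2n : (0 : ℝ) < 2 * n := by linarith
      have h6 : 0 ≤ -(2 * t * A) + t ^ 2 * B + 2 * (n : ℝ) * (lam j * |t|) := by
        have h0' := mul_le_mul_of_nonneg_left h0 (le_of_lt h2n)
        have e2 : (2 * (n : ℝ)) * ((1 / (2 * (n : ℝ))) * (-(2 * t * A) + t ^ 2 * B)
            + lam j * |t|)
            = -(2 * t * A) + t ^ 2 * B + 2 * (n : ℝ) * (lam j * |t|) := by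
          field_simp
        rw [mul_zero, e2] at h0'
        linarith
      linarith
    rw [abs_le]
    constructor
    · have : -A ≤ (n : ℝ) * lam j := by
        apply lim_aux (c := B / 2) (by linarith)
        intro t ht0 ht1
        have := hineq (-t)
        rw [abs_neg, abs_of_pos ht0] at this
        nlinarith
      linarith
    · apply lim_aux (c := B / 2) (by linarith)
      intro t ht0 ht1
      have := hineq t
      rw [abs_of_pos ht0] at this
      nlinarith
  -- diagonal identity: ∑ i, r i * X i j = n * tau2 j
  have hdiag : ∑ i, r i * X i j = (n : ℝ) * tau2 j := by
    set w : Fin n → ℝ := fun i => ∑ k', X i k'.1 * θhat j k' with hw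
    set C := ∑ i, r i * w i with hC
    set D := ∑ i, (w i) ^ 2 with hD
    set S := ∑ k', |θhat j k'| with hS
    have hDnn : 0 ≤ D := Finset.sum_nonneg fun i _ => sq_nonneg _
    have hineq : ∀ t : ℝ, |t| < 1 →
        t * C ≤ t ^ 2 / 2 * D + (n : ℝ) * (lam j * t * S) := by
      intro t ht
      have hexp : ∀ i, X i j - ∑ k', X i k'.1 * ((1 + t) * θhat j k')
          = r i - t * w i := by
        intro i
        have hs : ∑ k', X i k'.1 * ((1 + t) * θhat j k')
            = (∑ k', X i k'.1 * θhat j k') + t * ∑ k', X i k'.1 * θhat j k' := by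
          rw [Finset.mul_sum, ← Finset.sum_add_distrib]
          exact Finset.sum_congr rfl fun k' _ => by ring
        rw [hs]; simp only [hr, hw]; ring
      have h1 := hkey (fun k' => (1 + t) * θhat j k')
      have hsum : ∑ i, (X i j - ∑ k', X i k'.1 * ((1 + t) * θhat j k')) ^ 2
          = ∑ i, (r i - t * w i) ^ 2 :=
        Finset.sum_congr rfl fun i _ => by rw [hexp i]
      rw [hsum, sq_expand n r w t] at h1
      have h2 : ∑ k', |(1 + t) * θhat j k'| = (1 + t) * S := by
        rw [hS, Finset.mul_sum]
        refine Finset.sum_congr rfl fun k' _ => ?_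
        rw [abs_mul, abs_of_pos (by cases abs_lt.mp ht; linarith)]
      rw [h2] at h1
      have e1 : (1 / (2 * (n : ℝ))) * (∑ i, r i ^ 2 - 2 * t * C + t ^ 2 * D)
          = (1 / (2 * (n : ℝ))) * (∑ i, r i ^ 2)
            + (1 / (2 * (n : ℝ))) * (-(2 * t * C) + t ^ 2 * D) := by ring
      rw [e1] at h1
      have h0 : 0 ≤ (1 / (2 * (n : ℝ))) * (-(2 * t * C) + t ^ 2 * D)
          + lam j * (t * S) := by nlinarith
      have h2n : (0 : ℝ) < 2 * n := by linarith
      have h0' := mul_le_mul_of_nonneg_left h0 (le_of_lt h2n)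
      have e2 : (2 * (n : ℝ)) * ((1 / (2 * (n : ℝ))) * (-(2 * t * C) + t ^ 2 * D)
          + lam j * (t * S))
          = -(2 * t * C) + t ^ 2 * D + 2 * (n : ℝ) * (lam j * (t * S)) := by
        field_simp
      rw [mul_zero, e2] at h0'
      linarith
    have hle : C ≤ (n : ℝ) * (lam j * S) := by
      apply lim_aux (c := D / 2) (by linarith)
      intro t ht0 ht1
      have := hineq t (by rw [abs_of_pos ht0]; exact ht1)
      nlinarith
    have hge : (n : ℝ) * (lam j * S) ≤ C := by
      apply lim_aux (c := D / 2) (by linarith)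
      intro t ht0 ht1
      have := hineq (-t) (by rw [abs_neg, abs_of_pos ht0]; exact ht1)
      nlinarith
    have hCeq : C = (n : ℝ) * (lam j * S) := le_antisymm hle hge
    have hsplit : ∀ i, r i * X i j = r i ^ 2 + r i * w i := by
      intro i; simp only [hr, hw]; ring
    rw [Finset.sum_congr rfl fun i _ => hsplit i, Finset.sum_add_distrib]
    have ht := htau j
    rw [← hS] at ht
    have hnt : (n : ℝ) * tau2 j = ∑ i, r i ^ 2 + (n : ℝ) * (lam j * S) := by
      rw [ht]; field_simp; ring
    rw [hnt, ← hC, hCeq]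
  -- entry formula
  have hτne : tau2 j ≠ 0 := (htaupos j).ne'
  have hnne : (n : ℝ) ≠ 0 := hnpos.ne'
  have hentry : ∑ l, Theta j l * Sigma l k = (∑ i, r i * X i k) / ((n : ℝ) * tau2 j) := by
    have hterm : ∀ l, Theta j l * Sigma l k
        = (1 / ((n : ℝ) * tau2 j)) * ∑ i,
            ((if h : l = j then (1 : ℝ) else -(θhat j ⟨l, h⟩)) * X i l) * X i k := by
      intro l
      rw [hTheta, hSigma]
      set c := (if h : l = j then (1 : ℝ) else -(θhat j ⟨l, h⟩)) with hc
      rw [show ∑ i, (c * X i l) * X i k = c * ∑ i, X i l * X i k from by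
        rw [Finset.mul_sum]; exact Finset.sum_congr rfl fun i _ => by ring]
      field_simp
    rw [Finset.sum_congr rfl fun l _ => hterm l, ← Finset.mul_sum, Finset.sum_comm]
    have hinner : ∀ i, ∑ l, ((if h : l = j then (1 : ℝ) else -(θhat j ⟨l, h⟩)) * X i l) * X i k
        = r i * X i k := by
      intro i
      rw [← Finset.sum_mul, hresid i]
    rw [Finset.sum_congr rfl fun i _ => hinner i]
    rw [div_eq_mul_inv]
    ring
  -- conclude
  have hsup : lam j / tau2 j ≤ Finset.univ.sup'
      (Finset.univ_nonempty_iff.mpr ⟨⟨0, by omega⟩⟩) (fun j' => lam j' / tau2 j') :=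
    Finset.le_sup' (fun j' => lam j' / tau2 j') (Finset.mem_univ j)
  by_cases hkj : k = j
  · subst hkj
    rw [if_pos rfl, hentry, hdiag]
    have h1 : (n : ℝ) * tau2 k / ((n : ℝ) * tau2 k) = 1 := by
      field_simp
    rw [h1, sub_self, abs_zero]
    exact le_trans (div_nonneg (hlam k).le (htaupos k).le) hsup
  · rw [if_neg hkj, sub_zero, hentry, abs_div]
    rw [abs_of_pos (mul_pos hnpos (htaupos j))]
    refine le_trans ?_ hsup
    rw [div_le_div_iff₀ (mul_pos hnpos (htaupos j)) (htaupos j)]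
    have := hKKT k hkj
    nlinarith [this, htaupos j, hnpos]
end

section
/- In the nodewise regression setup with all τ̂_j² > 0, for every j ∈ {1,…,p} one has Θ̂_{j·} Σ̃ Θ̂_{j·}ᵀ ≤ 1/τ̂_j², i.e. the quadratic form of Σ̃ evaluated at the j-th row of Θ̂ is at most the j-th diagonal entry of Θ̂. -/
open Finset

theorem stmt_5 (n p : ℕ) (hn : 0 < n) (hp : 2 ≤ p)
    (X : Matrix (Fin n) (Fin p) ℝ) (lam : Fin p → ℝ) (hlam : ∀ j, 0 < lam j)
    (θhat : ∀ j : Fin p, {k : Fin p // k ≠ j} → ℝ)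
    (hmin : ∀ j : Fin p, ∀ θ : {k : Fin p // k ≠ j} → ℝ,
      (1 / (2 * (n : ℝ))) * ∑ i, (X i j - ∑ k, X i k.1 * θhat j k) ^ 2
          + lam j * ∑ k, |θhat j k| ≤
      (1 / (2 * (n : ℝ))) * ∑ i, (X i j - ∑ k, X i k.1 * θ k) ^ 2
          + lam j * ∑ k, |θ k|)
    (tau2 : Fin p → ℝ)
    (htau : ∀ j, tau2 j =
      (1 / (n : ℝ)) * ∑ i, (X i j - ∑ k, X i k.1 * θhat j k) ^ 2
          + lam j * ∑ k, |θhat j k|)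
    (htaupos : ∀ j, 0 < tau2 j)
    (Theta : Matrix (Fin p) (Fin p) ℝ)
    (hTheta : ∀ j k, Theta j k =
      (if h : k = j then (1 : ℝ) else -(θhat j ⟨k, h⟩)) / tau2 j)
    (Sigma : Matrix (Fin p) (Fin p) ℝ)
    (hSigma : ∀ k l, Sigma k l = (1 / (n : ℝ)) * ∑ i, X i k * X i l) :
    ∀ j : Fin p, ∑ k, ∑ l, Theta j k * Sigma k l * Theta j l ≤ 1 / tau2 j := by
  intro j
  have hτ := htaupos j
  set C : Fin p → ℝ := fun k => if h : k = j then (1 : ℝ) else -(θhat j ⟨k, h⟩) with hC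
  set θe : Fin p → ℝ := fun k => if h : k ≠ j then θhat j ⟨k, h⟩ else 0 with hθe
  set r : Fin n → ℝ := fun i => X i j - ∑ k : {k : Fin p // k ≠ j}, X i k.1 * θhat j k with hr
  -- r i = ∑ k, C k * X i k
  have hCsum : ∀ i, ∑ k, C k * X i k = r i := by
    intro i
    have hsub : ∑ k : {k : Fin p // k ≠ j}, X i k.1 * θhat j k
        = ∑ k ∈ univ.erase j, X i k * θe k := by
      rw [Finset.sum_subtype (p := fun k => k ≠ j) (univ.erase j) (by simp) (fun k => X i k * θe k)]
      apply Finset.sum_congr rfl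
      rintro ⟨k, hk⟩ _
      simp [hθe, hk]
    rw [← Finset.add_sum_erase _ _ (mem_univ j)]
    have h1 : ∑ k ∈ univ.erase j, C k * X i k = -∑ k ∈ univ.erase j, X i k * θe k := by
      rw [← Finset.sum_neg_distrib]
      apply Finset.sum_congr rfl
      intro k hk
      have hk' : k ≠ j := Finset.ne_of_mem_erase hk
      simp only [hC, hθe, dif_neg hk', dif_pos hk']
      ring
    rw [h1, ← hsub]
    simp [hC, hr, sub_eq_add_neg]
  -- quadratic form identity
  have main : ∑ k, ∑ l, C k * Sigma k l * C l = (1 / (n : ℝ)) * ∑ i, (r i) ^ 2 := by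
    have step1 : ∀ k l, C k * Sigma k l * C l
        = (1 / (n : ℝ)) * ∑ i, (C k * X i k) * (C l * X i l) := by
      intro k l
      rw [hSigma]
      simp only [Finset.mul_sum, Finset.sum_mul]
      apply Finset.sum_congr rfl
      intros; ring
    calc ∑ k, ∑ l, C k * Sigma k l * C l
        = ∑ k, ∑ l, (1 / (n : ℝ)) * ∑ i, (C k * X i k) * (C l * X i l) := by
          exact Finset.sum_congr rfl fun k _ => Finset.sum_congr rfl fun l _ => step1 k l
      _ = (1 / (n : ℝ)) * ∑ k, ∑ l, ∑ i, (C k * X i k) * (C l * X i l) := by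
          rw [Finset.mul_sum]
          exact Finset.sum_congr rfl fun k _ => (Finset.mul_sum _ _ _).symm
      _ = (1 / (n : ℝ)) * ∑ k, ∑ i, ∑ l, (C k * X i k) * (C l * X i l) := by
          congr 1
          exact Finset.sum_congr rfl fun k _ => Finset.sum_comm
      _ = (1 / (n : ℝ)) * ∑ i, ∑ k, ∑ l, (C k * X i k) * (C l * X i l) := by
          rw [Finset.sum_comm]
      _ = (1 / (n : ℝ)) * ∑ i, (r i) ^ 2 := by
          congr 1
          apply Finset.sum_congr rfl
          intro i _
          rw [← hCsum i, sq, Finset.sum_mul_sum]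
  have hThetaC : ∀ k, Theta j k = C k / tau2 j := fun k => hTheta j k
  have lhs_eq : ∑ k, ∑ l, Theta j k * Sigma k l * Theta j l
      = ((1 / (n : ℝ)) * ∑ i, (r i) ^ 2) / (tau2 j) ^ 2 := by
    rw [← main]
    rw [Finset.sum_div]
    apply Finset.sum_congr rfl
    intro k _
    rw [Finset.sum_div]
    apply Finset.sum_congr rfl
    intro l _
    rw [hThetaC, hThetaC]
    ring
  rw [lhs_eq]
  have hS : (1 / (n : ℝ)) * ∑ i, (r i) ^ 2 ≤ tau2 j := by
    rw [htau j]
    have : 0 ≤ lam j * ∑ k, |θhat j k| :=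
      mul_nonneg (hlam j).le (Finset.sum_nonneg fun _ _ => abs_nonneg _)
    simp only [hr]
    linarith
  have : ((1 / (n : ℝ)) * ∑ i, (r i) ^ 2) / (tau2 j) ^ 2 ≤ tau2 j / (tau2 j) ^ 2 := by
    gcongr
  calc ((1 / (n : ℝ)) * ∑ i, (r i) ^ 2) / (tau2 j) ^ 2 ≤ tau2 j / (tau2 j) ^ 2 := this
    _ = 1 / tau2 j := by
        rw [sq, mul_comm, ← div_div, div_self hτ.ne']
end

section
/- Let K be an n×n real symmetric positive semidefinite matrix, λ₂ > 0, and A = K(nλ₂ I + K)⁻¹. Let (I − A)^{1/2} denote the positive semidefinite square root of the positive semidefinite matrix I − A. Then the spectral norm of (I − A)^{1/2} K (I − A)^{1/2} is at most nλ₂; equivalently, for every v ∈ ℝⁿ, vᵀ(I − A)^{1/2} K (I − A)^{1/2} v ≤ nλ₂‖v‖₂². -/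
open Finset Matrix

open scoped ComplexOrder in
noncomputable def Matrix.PosSemidef.sqrt {n 𝕜 : Type*} [Fintype n] [DecidableEq n] [RCLike 𝕜]
    {A : Matrix n n 𝕜} (hA : A.PosSemidef) : Matrix n n 𝕜 :=
  hA.1.eigenvectorUnitary.1 * diagonal ((↑) ∘ (Real.sqrt ·) ∘ hA.1.eigenvalues) *
    (star hA.1.eigenvectorUnitary : Matrix n n 𝕜)

open scoped ComplexOrder in
theorem Matrix.PosSemidef.sqrt_mul_self {n 𝕜 : Type*} [Fintype n] [DecidableEq n] [RCLike 𝕜]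
    {A : Matrix n n 𝕜} (hA : A.PosSemidef) : hA.sqrt * hA.sqrt = A := by
  conv_rhs => rw [hA.1.spectral_theorem]
  rw [Unitary.conjStarAlgAut_apply, Matrix.PosSemidef.sqrt]
  have hU := Unitary.coe_star_mul_self hA.1.eigenvectorUnitary
  simp only [Matrix.mul_assoc]
  rw [← Matrix.mul_assoc (star _ : Matrix n n 𝕜) _ _, hU, Matrix.one_mul, ← Matrix.mul_assoc (diagonal _), diagonal_mul_diagonal]
  congr 3
  funext i
  simp only [Function.comp_apply]
  rw [← RCLike.ofReal_mul, Real.mul_self_sqrt (hA.eigenvalues_nonneg i)]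

open scoped ComplexOrder in
theorem Matrix.PosSemidef.sqrt_isHermitian {n 𝕜 : Type*} [Fintype n] [DecidableEq n] [RCLike 𝕜]
    {A : Matrix n n 𝕜} (hA : A.PosSemidef) : hA.sqrt.IsHermitian := by
  rw [IsHermitian, Matrix.PosSemidef.sqrt, conjTranspose_mul, conjTranspose_mul, Matrix.mul_assoc]
  rw [diagonal_conjTranspose]
  congr 2
  · rw [← star_eq_conjTranspose, star_star]
  · congr 1; funext i; simp

theorem stmt_9 (n : ℕ) (hn : 0 < n) (K : Matrix (Fin n) (Fin n) ℝ)
    (hK : K.PosSemidef) (lam2 : ℝ) (hlam2 : 0 < lam2)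
    (A : Matrix (Fin n) (Fin n) ℝ)
    (hA : A = K * (((n : ℝ) * lam2) • (1 : Matrix (Fin n) (Fin n) ℝ) + K)⁻¹)
    (h1A : ((1 : Matrix (Fin n) (Fin n) ℝ) - A).PosSemidef) :
    ∀ v : Fin n → ℝ,
      v ⬝ᵥ (h1A.sqrt * K * h1A.sqrt).mulVec v ≤ (n : ℝ) * lam2 * ∑ i, v i ^ 2 := by
  intro v
  set c : ℝ := (n : ℝ) * lam2 with hc
  have hcpos : 0 < c := by positivity
  set M : Matrix (Fin n) (Fin n) ℝ := c • (1 : Matrix (Fin n) (Fin n) ℝ) + K with hMdef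
  have hone : (c • (1 : Matrix (Fin n) (Fin n) ℝ)).PosDef := by
    rw [Matrix.smul_one_eq_diagonal]
    exact Matrix.posDef_diagonal_iff.mpr fun _ => hcpos
  have hMpd : M.PosDef := hone.add_posSemidef hK
  have hMM : M * M⁻¹ = 1 := Matrix.mul_nonsing_inv M hMpd.det_pos.ne'.isUnit
  set S : Matrix (Fin n) (Fin n) ℝ := h1A.sqrt with hSdef
  have hS2 : S * S = 1 - A := h1A.sqrt_mul_self
  have h1Aeq : (1 : Matrix (Fin n) (Fin n) ℝ) - A = c • M⁻¹ := by
    rw [hA]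
    calc (1 : Matrix (Fin n) (Fin n) ℝ) - K * M⁻¹ = (M - K) * M⁻¹ := by
          rw [Matrix.sub_mul, hMM]
      _ = (c • (1 : Matrix (Fin n) (Fin n) ℝ) + K - K) * M⁻¹ := by rw [hMdef]
      _ = (c • (1 : Matrix (Fin n) (Fin n) ℝ)) * M⁻¹ := by rw [add_sub_cancel_right]
      _ = c • M⁻¹ := by rw [Matrix.smul_mul, Matrix.one_mul]
  have hS2' : S * S = c • M⁻¹ := hS2.trans h1Aeq
  set B : Matrix (Fin n) (Fin n) ℝ := c⁻¹ • (M * S) with hBdef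
  have hBS : B * S = 1 := by
    rw [hBdef, Matrix.smul_mul, Matrix.mul_assoc, hS2', Matrix.mul_smul, hMM]
    rw [smul_smul, inv_mul_cancel₀ hcpos.ne', one_smul]
  have hSB : S * B = 1 := mul_eq_one_comm.mp hBS
  have hMS : M * S = c • B := by
    rw [hBdef, smul_smul, mul_inv_cancel₀ hcpos.ne', one_smul]
  have hSMS : S * M * S = c • (1 : Matrix (Fin n) (Fin n) ℝ) := by
    rw [Matrix.mul_assoc, hMS, Matrix.mul_smul, hSB]
  have hK' : K = M - c • (1 : Matrix (Fin n) (Fin n) ℝ) := by rw [hMdef]; abel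
  have hSKS : S * K * S = c • (1 : Matrix (Fin n) (Fin n) ℝ) - c • (S * S) := by
    have e1 : S * (c • (1 : Matrix (Fin n) (Fin n) ℝ)) = c • S := by
      rw [Matrix.mul_smul, Matrix.mul_one]
    rw [hK', Matrix.mul_sub, Matrix.sub_mul, hSMS, e1, Matrix.smul_mul]
  have hw : 0 ≤ v ⬝ᵥ (S * S).mulVec v := by
    have hsym : Sᵀ = S := h1A.sqrt_isHermitian
    have : v ⬝ᵥ (S * S).mulVec v = (S.mulVec v) ⬝ᵥ (S.mulVec v) := by
      rw [← Matrix.mulVec_mulVec, Matrix.dotProduct_mulVec, ← Matrix.mulVec_transpose, hsym]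
    rw [this]
    exact Finset.sum_nonneg fun i _ => mul_self_nonneg _
  have hvv : v ⬝ᵥ v = ∑ i, v i ^ 2 := by
    simp [dotProduct, pow_two]
  rw [hSKS]
  rw [Matrix.sub_mulVec, dotProduct_sub, Matrix.smul_mulVec,
    Matrix.smul_mulVec, Matrix.one_mulVec, dotProduct_smul,
    dotProduct_smul, smul_eq_mul, smul_eq_mul, hvv]
  nlinarith [hw]
end

section
/- In the nodewise regression setup applied to the transformed design X̃ = B^{1/2}X, where X ∈ ℝ^{n×p} and B ∈ ℝ^{n×n} is symmetric with 0 ≼ B ≼ I, and with all τ̂_j² > 0, for every j ∈ {1,…,p} the row w_{j·} = e_jᵀΘ̂XᵀB of the matrix Θ̂XᵀB satisfies ‖w_{j·}‖₂² ≤ n/τ̂_j², i.e. e_jᵀΘ̂XᵀB²XΘ̂ᵀe_j ≤ n/τ̂_j². -/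
open Finset Matrix

theorem stmt_12 (n p : ℕ) (hn : 0 < n) (hp : 2 ≤ p)
    (X : Matrix (Fin n) (Fin p) ℝ)
    (B : Matrix (Fin n) (Fin n) ℝ) (hB : B.PosSemidef)
    (hIB : ((1 : Matrix (Fin n) (Fin n) ℝ) - B).PosSemidef)
    (lam : Fin p → ℝ) (hlam : ∀ j, 0 < lam j)
    (Xt : Matrix (Fin n) (Fin p) ℝ) (hXt : Xt = (hB.1.eigenvectorUnitary.1 *
      diagonal ((RCLike.ofReal : ℝ → ℝ) ∘ Real.sqrt ∘ hB.1.eigenvalues) *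
      (star hB.1.eigenvectorUnitary : Matrix (Fin n) (Fin n) ℝ)) * X)
    (θhat : ∀ j : Fin p, {k : Fin p // k ≠ j} → ℝ)
    (hmin : ∀ j : Fin p, ∀ θ : {k : Fin p // k ≠ j} → ℝ,
      (1 / (2 * (n : ℝ))) * ∑ i, (Xt i j - ∑ k, Xt i k.1 * θhat j k) ^ 2
          + lam j * ∑ k, |θhat j k| ≤
      (1 / (2 * (n : ℝ))) * ∑ i, (Xt i j - ∑ k, Xt i k.1 * θ k) ^ 2
          + lam j * ∑ k, |θ k|)
    (tau2 : Fin p → ℝ)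
    (htau : ∀ j, tau2 j =
      (1 / (n : ℝ)) * ∑ i, (Xt i j - ∑ k, Xt i k.1 * θhat j k) ^ 2
          + lam j * ∑ k, |θhat j k|)
    (htaupos : ∀ j, 0 < tau2 j)
    (Theta : Matrix (Fin p) (Fin p) ℝ)
    (hTheta : ∀ j k, Theta j k =
      (if h : k = j then (1 : ℝ) else -(θhat j ⟨k, h⟩)) / tau2 j)
    (W : Matrix (Fin p) (Fin n) ℝ) (hW : W = Theta * Xᵀ * B) :
    ∀ j : Fin p, ∑ i, (W j i) ^ 2 ≤ (n : ℝ) / tau2 j := by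
  intro j
  set S : Matrix (Fin n) (Fin n) ℝ := hB.1.eigenvectorUnitary.1 *
      diagonal ((RCLike.ofReal : ℝ → ℝ) ∘ Real.sqrt ∘ hB.1.eigenvalues) *
      (star hB.1.eigenvectorUnitary : Matrix (Fin n) (Fin n) ℝ) with hSdef
  have hτ := htaupos j
  -- the vector c (row j of Ĉ)
  obtain ⟨c, hc⟩ : ∃ c : Fin p → ℝ,
      c = fun k => if h : k = j then (1 : ℝ) else -(θhat j ⟨k, h⟩) := ⟨_, rfl⟩
  obtain ⟨u, hu⟩ : ∃ u : Fin n → ℝ, u = X *ᵥ c := ⟨_, rfl⟩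
  obtain ⟨r, hr⟩ : ∃ r : Fin n → ℝ,
      r = fun i => Xt i j - ∑ k, Xt i k.1 * θhat j k := ⟨_, rfl⟩
  have hsym : ∀ a b, B a b = B b a := fun a b => by
    have h := congrFun (congrFun hB.1 a) b
    simp only [conjTranspose_apply, star_trivial] at h
    exact h.symm
  have hSt : Sᵀ = S := by
    simp [hSdef, transpose_mul, Matrix.star_eq_conjTranspose,
      conjTranspose_eq_transpose_of_trivial, Matrix.mul_assoc]
  have hdotS : ∀ x y : Fin n → ℝ, x ⬝ᵥ (S *ᵥ y) = (S *ᵥ x) ⬝ᵥ y := fun x y => by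
    rw [dotProduct_mulVec, ← hSt, vecMul_transpose, hSt]
  have hsq : S * S = B := by
    set U := hB.1.eigenvectorUnitary
    set D := diagonal ((RCLike.ofReal : ℝ → ℝ) ∘ Real.sqrt ∘ hB.1.eigenvalues)
    have hU : (star U : Matrix (Fin n) (Fin n) ℝ) * U.1 = 1 := Unitary.star_mul_self_of_mem U.2
    have hD : D * D = diagonal ((RCLike.ofReal : ℝ → ℝ) ∘ hB.1.eigenvalues) := by
      rw [diagonal_mul_diagonal]; congr 1; funext i
      simp [Real.mul_self_sqrt (hB.eigenvalues_nonneg i)]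
    conv_rhs => rw [hB.1.spectral_theorem, Unitary.conjStarAlgAut_apply]
    rw [hSdef, show U.1 * D * (star U : Matrix (Fin n) (Fin n) ℝ) *
        (U.1 * D * (star U : Matrix (Fin n) (Fin n) ℝ)) =
        U.1 * (D * ((star U : Matrix (Fin n) (Fin n) ℝ) * U.1) * D) *
        (star U : Matrix (Fin n) (Fin n) ℝ) by simp only [Matrix.mul_assoc],
      hU, Matrix.mul_one, hD]
  -- r = Xt *ᵥ c
  have hrc : Xt *ᵥ c = r := by
    funext i
    simp only [mulVec, dotProduct]
    have hsplit : ∑ k : Fin p, Xt i k * c k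
        = Xt i j * c j + ∑ k ∈ Finset.univ.erase j, Xt i k * c k :=
      (Finset.add_sum_erase _ _ (Finset.mem_univ j)).symm
    have hsub : ∑ k ∈ Finset.univ.erase j, Xt i k * c k
        = ∑ k : {k : Fin p // k ≠ j}, Xt i k.1 * c k.1 :=
      Finset.sum_subtype _ (fun k => by simp) (fun k => Xt i k * c k)
    rw [hsplit, hsub]
    have h1 : c j = 1 := by simp [hc]
    have h2 : ∀ k : {k : Fin p // k ≠ j}, c k.1 = -(θhat j k) := by
      intro k
      simp only [hc, dif_neg k.2]
    simp only [h1, h2, hr, mul_one, mul_neg, Finset.sum_neg_distrib]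
    ring
  have hTc : ∀ k, Theta j k = c k / tau2 j := fun k => by rw [hc]; exact hTheta j k
  -- W j = (1/τ²) • (B *ᵥ u)
  have hWj : ∀ i, W j i = (1 / tau2 j) * (B *ᵥ u) i := by
    intro i
    rw [hW]
    simp only [mul_apply, transpose_apply, mulVec, dotProduct, hu]
    rw [Finset.mul_sum]
    refine Finset.sum_congr rfl fun l _ => ?_
    have hinner : ∑ k, Theta j k * X l k = (1 / tau2 j) * ∑ k, X l k * c k := by
      rw [Finset.mul_sum]
      refine Finset.sum_congr rfl fun k _ => ?_
      rw [hTc k]; ring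
    rw [hinner, hsym i l]
    ring
  -- s = sqrt(B) *ᵥ u equals the residual r
  obtain ⟨sv, hsv⟩ : ∃ sv : Fin n → ℝ, sv = S *ᵥ u := ⟨_, rfl⟩
  have hsr : sv = r := by
    rw [hsv, hu, Matrix.mulVec_mulVec, ← hXt, hrc]
  have hBu : S *ᵥ sv = B *ᵥ u := by
    rw [hsv, Matrix.mulVec_mulVec, hsq]
  -- quadratic form inequality from PSD of I - B
  have hquad : (B *ᵥ u) ⬝ᵥ (B *ᵥ u) ≤ ∑ i, r i ^ 2 := by
    have h := hIB.dotProduct_mulVec_nonneg sv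
    rw [show star sv = sv from star_trivial sv, Matrix.sub_mulVec, Matrix.one_mulVec,
      dotProduct_sub] at h
    have hBs : S *ᵥ (S *ᵥ sv) = B *ᵥ sv := by
      rw [Matrix.mulVec_mulVec, hsq]
    have h3 : sv ⬝ᵥ (B *ᵥ sv) = (B *ᵥ u) ⬝ᵥ (B *ᵥ u) := by
      rw [← hBs, hdotS, hBu]
    have h4 : sv ⬝ᵥ sv = ∑ i, r i ^ 2 := by
      rw [hsr]; simp [dotProduct, sq]
    rw [h3, h4] at h
    linarith
  -- residual bound : ∑ r² ≤ n * tau2 j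
  have hres : ∑ i, r i ^ 2 ≤ (n : ℝ) * tau2 j := by
    have h := htau j
    have hnn : 0 ≤ lam j * ∑ k, |θhat j k| :=
      mul_nonneg (hlam j).le (Finset.sum_nonneg fun k _ => abs_nonneg _)
    have hnpos : (0 : ℝ) < n := by exact_mod_cast hn
    have hkey : (1 / (n : ℝ)) * ∑ i, r i ^ 2 ≤ tau2 j := by
      rw [h]; simp only [hr]; linarith
    calc ∑ i, r i ^ 2 = (n : ℝ) * ((1 / (n : ℝ)) * ∑ i, r i ^ 2) := by
          field_simp
      _ ≤ (n : ℝ) * tau2 j := mul_le_mul_of_nonneg_left hkey hnpos.le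
  -- put it together
  have hfinal : ∑ i, (W j i) ^ 2 = (1 / tau2 j) ^ 2 * ((B *ᵥ u) ⬝ᵥ (B *ᵥ u)) := by
    simp only [dotProduct, Finset.mul_sum]
    refine Finset.sum_congr rfl fun i _ => ?_
    rw [hWj i]; ring
  rw [hfinal]
  calc (1 / tau2 j) ^ 2 * ((B *ᵥ u) ⬝ᵥ (B *ᵥ u))
      ≤ (1 / tau2 j) ^ 2 * ((n : ℝ) * tau2 j) := by
        refine mul_le_mul_of_nonneg_left (hquad.trans hres) (sq_nonneg _)
    _ = (n : ℝ) / tau2 j := by field_simp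
end

section
/- Let α > 1/2 be a real number satisfying 2 + 1/(2α−1) ≤ 1600. Then for every positive integer n, the value r = n^{−α/(2α+1)} lies in (0,1] and satisfies the critical-radius inequality 40 r² ≥ (1/√n)·(Σ_{ℓ=1}^∞ min(r², ℓ^{−2α}))^{1/2}. -/
open Real

private lemma tail_bound (p : ℝ) (hp : 1 < p) (K : ℕ) (hK : 1 ≤ K) :
    ∑' m : ℕ, ((K : ℝ) + 1 + m) ^ (-p) ≤ (K : ℝ) ^ (1 - p) / (p - 1) := by
  have hK0 : (0 : ℝ) < K := by exact_mod_cast hK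
  have hnn : ∀ m : ℕ, 0 ≤ ((K : ℝ) + 1 + m) ^ (-p) := fun m => by positivity
  apply tsum_le_of_sum_range_le hnn
  intro N
  have hanti : AntitoneOn (fun x : ℝ => x ^ (-p)) (Set.Icc (K : ℝ) ((K : ℝ) + N)) := by
    intro x hx y hy hxy
    exact Real.rpow_le_rpow_of_nonpos (lt_of_lt_of_le hK0 hx.1) hxy (by linarith)
  have hsum := hanti.sum_le_integral
  have hint : ∫ x in (K : ℝ)..((K : ℝ) + N), x ^ (-p)
      = (((K : ℝ) + N) ^ (-p + 1) - (K : ℝ) ^ (-p + 1)) / (-p + 1) := by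
    apply integral_rpow
    right
    constructor
    · intro h; linarith [neg_eq_iff_eq_neg.mp h]
    · intro h
      rw [Set.mem_uIcc] at h
      rcases h with ⟨h1, _⟩ | ⟨h1, _⟩ <;> nlinarith [Nat.cast_nonneg (α := ℝ) N]
  have heq : (∑ i ∈ Finset.range N, ((K : ℝ) + 1 + i) ^ (-p))
      = ∑ i ∈ Finset.range N, (fun x : ℝ => x ^ (-p)) ((K : ℝ) + ((i + 1 : ℕ) : ℝ)) := by
    apply Finset.sum_congr rfl
    intro i _
    push_cast
    ring_nf
  rw [heq]
  refine le_trans hsum ?_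
  rw [hint]
  have h1 : (0:ℝ) ≤ ((K : ℝ) + N) ^ (-p + 1) := by positivity
  rw [show (-p + 1 : ℝ) = -(p - 1) by ring] at *
  rw [show (1 - p : ℝ) = -(p - 1) by ring]
  rw [div_neg, ← neg_div, neg_sub]
  rw [div_le_div_iff₀ (by linarith) (by linarith)]
  nlinarith [Real.rpow_nonneg (le_of_lt hK0) (-(p - 1))]

private lemma sum_min_le (α r : ℝ) (hα : 1 / 2 < α) (hr0 : 0 < r) (hr1 : r ≤ 1) :
    ∑' ℓ : ℕ, min (r ^ 2) (((ℓ : ℝ) + 1) ^ (-(2 * α)))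
      ≤ (2 + 1 / (2 * α - 1)) * r ^ (2 - 1 / α : ℝ) := by
  have hα0 : (0 : ℝ) < α := by linarith
  have hα1 : (0 : ℝ) < 2 * α - 1 := by linarith
  set x := r ^ (-(1 / α)) with hxdef
  have hx1 : 1 ≤ x := Real.one_le_rpow_of_pos_of_le_one_of_nonpos hr0 hr1 (by rw [neg_nonpos]; exact (one_div_pos.mpr hα0).le)
  have hx0 : 0 < x := by linarith
  set K := ⌈x⌉₊ with hKdef
  have hK1 : 1 ≤ K := Nat.one_le_ceil_iff.mpr hx0
  have hKx : x ≤ (K : ℝ) := Nat.le_ceil x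
  have hK2 : (K : ℝ) ≤ 2 * x := by
    have := Nat.ceil_lt_add_one hx0.le
    linarith
  clear_value K
  clear_value x
  -- summability
  have hsummaj : Summable (fun ℓ : ℕ => ((ℓ : ℝ) + 1) ^ (-(2 * α))) := by
    have h := (Real.summable_nat_rpow (p := -(2 * α))).mpr (by linarith)
    have h2 := (summable_nat_add_iff (f := fun n : ℕ => (n : ℝ) ^ (-(2 * α))) 1).mpr h
    convert h2 using 2 with ℓ
    · rfl
    · push_cast
      ring_nf
  have hsum : Summable (fun ℓ : ℕ => min (r ^ 2) (((ℓ : ℝ) + 1) ^ (-(2 * α)))) := by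
    apply Summable.of_nonneg_of_le (fun ℓ => le_min (by positivity) (by positivity))
      (fun ℓ => min_le_right _ _) hsummaj
  rw [← hsum.sum_add_tsum_nat_add K]
  -- head bound
  have hhead : (∑ i ∈ Finset.range K, min (r ^ 2) (((i : ℝ) + 1) ^ (-(2 * α))))
      ≤ (K : ℝ) * r ^ 2 := by
    calc (∑ i ∈ Finset.range K, min (r ^ 2) (((i : ℝ) + 1) ^ (-(2 * α))))
        ≤ ∑ i ∈ Finset.range K, r ^ 2 :=
          Finset.sum_le_sum fun i _ => min_le_left _ _
      _ = (K : ℝ) * r ^ 2 := by rw [Finset.sum_const, Finset.card_range]; ring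
  -- tail bound
  have htail : (∑' i : ℕ, min (r ^ 2) ((((i + K : ℕ) : ℝ) + 1) ^ (-(2 * α))))
      ≤ (K : ℝ) ^ (1 - 2 * α) / (2 * α - 1) := by
    have h1 : (∑' i : ℕ, min (r ^ 2) ((((i + K : ℕ) : ℝ) + 1) ^ (-(2 * α))))
        ≤ ∑' i : ℕ, ((K : ℝ) + 1 + i) ^ (-(2 * α)) := by
      apply Summable.tsum_le_tsum _ (by
        apply Summable.of_nonneg_of_le (fun i => le_min (by positivity) (by positivity))
          (fun i => min_le_right _ _)
        exact (summable_nat_add_iff K).mpr hsummaj)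
      · have : Summable (fun m : ℕ => ((K : ℝ) + 1 + m) ^ (-(2 * α))) := by
          have h2 := (summable_nat_add_iff
            (f := fun n : ℕ => (n : ℝ) ^ (-(2 * α))) (K + 1)).mpr
            ((Real.summable_nat_rpow (p := -(2 * α))).mpr (by linarith))
          convert h2 using 2 with m
          · rfl
          · push_cast
            ring_nf
        exact this
      · intro i
        have : (((i + K : ℕ) : ℝ) + 1) = (K : ℝ) + 1 + i := by push_cast; ring
        rw [this]
        exact min_le_right _ _
    exact le_trans h1 (tail_bound (2 * α) (by linarith) K hK1)
  -- convert to rpow of r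
  have hKcast : (0 : ℝ) < K := by exact_mod_cast hK1
  have hKpow : (K : ℝ) ^ (1 - 2 * α) ≤ x ^ (1 - 2 * α : ℝ) :=
    Real.rpow_le_rpow_of_nonpos hx0 hKx (by linarith)
  have hxval : x ^ (1 - 2 * α : ℝ) = r ^ (2 - 1 / α : ℝ) := by
    rw [hxdef, ← Real.rpow_mul hr0.le]
    congr 1
    field_simp
    ring
  have hxr2 : x * r ^ 2 = r ^ (2 - 1 / α : ℝ) := by
    rw [hxdef, show (r : ℝ) ^ 2 = r ^ ((2 : ℕ) : ℝ) from (Real.rpow_natCast r 2).symm,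
      ← Real.rpow_add hr0]
    congr 1
    push_cast
    ring
  have hrpos : 0 ≤ r ^ (2 - 1 / α : ℝ) := Real.rpow_nonneg hr0.le _
  have hfin : (K : ℝ) * r ^ 2 + (K : ℝ) ^ (1 - 2 * α) / (2 * α - 1)
      ≤ (2 + 1 / (2 * α - 1)) * r ^ (2 - 1 / α : ℝ) := by
    have h1 : (K : ℝ) * r ^ 2 ≤ 2 * r ^ (2 - 1 / α : ℝ) := by
      rw [← hxr2]; nlinarith [sq_nonneg r]
    have h2 : (K : ℝ) ^ (1 - 2 * α) ≤ r ^ (2 - 1 / α : ℝ) := hxval ▸ hKpow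
    have h3 : (K : ℝ) ^ (1 - 2 * α) / (2 * α - 1) ≤ r ^ (2 - 1 / α : ℝ) / (2 * α - 1) := by
      gcongr
    have key : 2 * r ^ (2 - 1 / α : ℝ) + r ^ (2 - 1 / α : ℝ) / (2 * α - 1)
        = (2 + 1 / (2 * α - 1)) * r ^ (2 - 1 / α : ℝ) := by
      field_simp
    linarith
  exact le_trans (add_le_add hhead htail) hfin

theorem stmt_17 (α : ℝ) (hα : 1 / 2 < α) (hα2 : 2 + 1 / (2 * α - 1) ≤ 1600)
    (n : ℕ) (hn : 0 < n) :
    (0 < (n : ℝ) ^ (-(α / (2 * α + 1))) ∧ (n : ℝ) ^ (-(α / (2 * α + 1))) ≤ 1) ∧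
    (1 / Real.sqrt n) *
        Real.sqrt (∑' ℓ : ℕ,
          min (((n : ℝ) ^ (-(α / (2 * α + 1)))) ^ 2) (((ℓ : ℝ) + 1) ^ (-(2 * α)))) ≤
      40 * ((n : ℝ) ^ (-(α / (2 * α + 1)))) ^ 2 := by
  have hα0 : (0 : ℝ) < α := by linarith
  have hα1 : (0 : ℝ) < 2 * α + 1 := by linarith
  have hn1 : (1 : ℝ) ≤ n := by exact_mod_cast hn
  have hn0 : (0 : ℝ) < n := by linarith
  set r : ℝ := (n : ℝ) ^ (-(α / (2 * α + 1))) with hrdef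
  have hr0 : 0 < r := Real.rpow_pos_of_pos hn0 _
  have hr1 : r ≤ 1 :=
    Real.rpow_le_one_of_one_le_of_nonpos hn1 (neg_nonpos.mpr (by positivity))
  refine ⟨⟨hr0, hr1⟩, ?_⟩
  have hS := sum_min_le α r hα hr0 hr1
  have hS2 : (∑' ℓ : ℕ, min (r ^ 2) (((ℓ : ℝ) + 1) ^ (-(2 * α))))
      ≤ 1600 * r ^ (2 - 1 / α : ℝ) := by
    refine le_trans hS ?_
    have := Real.rpow_nonneg hr0.le (2 - 1 / α)
    nlinarith
  have hsqrt : Real.sqrt (∑' ℓ : ℕ, min (r ^ 2) (((ℓ : ℝ) + 1) ^ (-(2 * α))))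
      ≤ Real.sqrt (1600 * r ^ (2 - 1 / α : ℝ)) := Real.sqrt_le_sqrt hS2
  have hsq1600 : Real.sqrt (1600 * r ^ (2 - 1 / α : ℝ))
      = 40 * r ^ ((2 - 1 / α) / 2 : ℝ) := by
    rw [show (1600 : ℝ) = 40 ^ 2 by norm_num,
      Real.sqrt_mul (by positivity), Real.sqrt_sq (by norm_num),
      Real.sqrt_eq_rpow, ← Real.rpow_mul hr0.le]
    ring_nf
  have hmono : (1 / Real.sqrt n) *
        Real.sqrt (∑' ℓ : ℕ, min (r ^ 2) (((ℓ : ℝ) + 1) ^ (-(2 * α))))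
      ≤ (1 / Real.sqrt n) * (40 * r ^ ((2 - 1 / α) / 2 : ℝ)) := by
    rw [← hsq1600]
    exact mul_le_mul_of_nonneg_left hsqrt (by positivity)
  refine le_trans hmono (le_of_eq ?_)
  have h1 : (1 : ℝ) / Real.sqrt n = (n : ℝ) ^ (-(1 / 2) : ℝ) := by
    rw [Real.sqrt_eq_rpow, one_div, ← Real.rpow_neg hn0.le]
  have h2 : r ^ ((2 - 1 / α) / 2 : ℝ)
      = (n : ℝ) ^ ((-(α / (2 * α + 1))) * ((2 - 1 / α) / 2)) := by
    rw [hrdef, ← Real.rpow_mul hn0.le]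
  have h3 : r ^ 2 = (n : ℝ) ^ ((-(α / (2 * α + 1))) * 2) := by
    rw [hrdef, ← Real.rpow_natCast (((n : ℝ) ^ (-(α / (2 * α + 1))))) 2,
      ← Real.rpow_mul hn0.le]
    norm_num
  rw [h1, h2, h3, ← mul_assoc, mul_comm ((n : ℝ) ^ (-(1 / 2) : ℝ)) 40, mul_assoc,
    ← Real.rpow_add hn0]
  congr 2
  field_simp
  ring
end
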